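/- For every d ∈ (0,1) such that Q(d) ≠ 0, the WENO-RM(260) mapping function satisfies g(d) = d, is 6 times differentiable at ω = d with g⁽ʲ⁾(d) = 0 for all 1 ≤ j ≤ 6, and g⁽⁷⁾(d) = 7!/Q(d) ≠ 0; i.e., ω = d is a critical point of order exactly 6. -/

import Mathlib

/-- The cubic denominator of the WENO-RM(260) mapping function, with
`a₀ = d⁶`, `a₁ = −7d⁵`, `a₂ = 21d⁴`, `a₃ = (1−d)⁶ − a₀ − a₁ − a₂`. -/
noncomputable def QRM (d ω : ℝ) : ℝ :=
  d ^ 6 + (-7 * d ^ 5) * ω + (21 * d ^ 4) * ω ^ 2 +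
    ((1 - d) ^ 6 - d ^ 6 - (-7 * d ^ 5) - 21 * d ^ 4) * ω ^ 3

/-- The WENO-RM(260) mapping function. -/
noncomputable def gRM (d ω : ℝ) : ℝ := d + (ω - d) ^ 7 / QRM d ω

private lemma iteratedDeriv_const_add'' (c : ℝ) (f : ℝ → ℝ) (n : ℕ) :
    iteratedDeriv (n + 1) (fun x => c + f x) = iteratedDeriv (n + 1) f := by
  rw [iteratedDeriv_succ', iteratedDeriv_succ', deriv_const_add']

/-- For every `d ∈ (0,1)` with `Q(d) ≠ 0`, the WENO-RM(260) mapping satisfies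
`g(d) = d`, is `6` times differentiable at `ω = d` with `g⁽ʲ⁾(d) = 0` for all
`1 ≤ j ≤ 6`, and `g⁽⁷⁾(d) = 7!/Q(d) ≠ 0`; i.e. `ω = d` is a critical point of
order exactly `6`. -/
theorem wenoRM_critical_point_order_six (d : ℝ) (hd : d ∈ Set.Ioo (0 : ℝ) 1)
    (hQ : QRM d d ≠ 0) :
    gRM d d = d ∧
    ContDiffAt ℝ 6 (gRM d) d ∧
    (∀ j : ℕ, 1 ≤ j → j ≤ 6 → iteratedDeriv j (gRM d) d = 0) ∧
    iteratedDeriv 7 (gRM d) d = (Nat.factorial 7 : ℝ) / QRM d d ∧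
    (Nat.factorial 7 : ℝ) / QRM d d ≠ 0 := by
  have hQa : AnalyticAt ℝ (QRM d) d := by
    unfold QRM
    have h1 : AnalyticAt ℝ (fun ω : ℝ => ω) d := analyticAt_id
    exact ((analyticAt_const.add (analyticAt_const.mul h1)).add
      (analyticAt_const.mul (h1.pow 2))).add (analyticAt_const.mul (h1.pow 3))
  have hha : AnalyticAt ℝ (fun ω => (QRM d ω)⁻¹) d := hQa.inv hQ
  have hgeq : gRM d = fun ω => d + (ω - d) ^ 7 * (QRM d ω)⁻¹ := by
    funext ω; rw [gRM, div_eq_mul_inv]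
  have hga : AnalyticAt ℝ (gRM d) d := by
    rw [hgeq]
    exact analyticAt_const.add (((analyticAt_id.sub analyticAt_const).pow 7).mul hha)
  obtain ⟨p, hp⟩ := hha
  set f : ℝ → ℝ := fun ω => (ω - d) ^ 7 * (QRM d ω)⁻¹ with hf
  set q : FormalMultilinearSeries ℝ ℝ ℝ :=
    FormalMultilinearSeries.ofScalars ℝ (fun n => if n < 7 then 0 else p.coeff (n - 7)) with hqdef
  have hqcoeff : ∀ n, q.coeff n = if n < 7 then 0 else p.coeff (n - 7) := by
    intro n
    rw [FormalMultilinearSeries.coeff, hqdef,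
      show (1 : Fin n → ℝ) = fun _ => (1:ℝ) from rfl,
      FormalMultilinearSeries.ofScalars_apply_eq]
    simp
  -- the power series of `f` at `d`
  have hq : HasFPowerSeriesAt f q d := by
    rw [hasFPowerSeriesAt_iff]
    filter_upwards [hasFPowerSeriesAt_iff.mp hp] with z hz
    have h1 : HasSum (fun n => z ^ (n + 7) • q.coeff (n + 7)) (z ^ 7 * (QRM d (d + z))⁻¹) := by
      refine (hz.mul_left (z ^ 7)).congr_fun fun n => ?_
      rw [hqcoeff]
      simp only [Nat.add_sub_cancel, if_neg (by omega : ¬ n + 7 < 7), smul_eq_mul, pow_add]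
      ring
    have hsum : ∑ i ∈ Finset.range 7, z ^ i • q.coeff i = 0 := by
      refine Finset.sum_eq_zero fun i hi => ?_
      rw [hqcoeff, if_pos (Finset.mem_range.mp hi)]
      simp
    have h2 : HasSum (fun n => z ^ n • q.coeff n)
        (z ^ 7 * (QRM d (d + z))⁻¹ + ∑ i ∈ Finset.range 7, z ^ i • q.coeff i) :=
      (hasSum_nat_add_iff 7).mp h1
    rw [hsum, add_zero] at h2
    convert h2 using 1
    case e'_3 => rfl
    simp [hf]
  -- iterated derivatives of `f` at `d`
  have hder : ∀ n : ℕ, iteratedDeriv n f d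
      = (n.factorial : ℝ) * (if n < 7 then 0 else p.coeff (n - 7)) := by
    intro n
    obtain ⟨r, hqb⟩ := hq
    have := hqb.factorial_smul (1 : ℝ) n
    rw [iteratedDeriv]
    rw [← this]
    have : (q n fun _ => (1 : ℝ)) = q.coeff n := by
      rw [FormalMultilinearSeries.apply_eq_pow_smul_coeff]
      simp
    rw [this, hqcoeff]
    simp [smul_eq_mul]
  have hp0 : p.coeff 0 = (QRM d d)⁻¹ := by
    have := hp.coeff_zero (fun _ => (1 : ℝ))
    rwa [FormalMultilinearSeries.coeff]
  -- derivatives of `g` agree with those of `f` for `n ≥ 1`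
  have hgder : ∀ n : ℕ, 1 ≤ n → iteratedDeriv n (gRM d) d = iteratedDeriv n f d := by
    intro n hn
    obtain ⟨k, rfl⟩ := Nat.exists_eq_add_of_le hn
    rw [hgeq, add_comm 1 k, iteratedDeriv_const_add'']
  refine ⟨?_, ?_, ?_, ?_, ?_⟩
  · simp [gRM, sub_self, zero_pow]
  · exact hga.contDiffAt
  · intro j hj1 hj6
    rw [hgder j hj1, hder j, if_pos (by omega)]
    ring
  · rw [hgder 7 (by norm_num), hder 7, if_neg (by omega)]
    simp [hp0, div_eq_mul_inv]
  · exact div_ne_zero (by positivity) hQ
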